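/- Let I ⊂ J be ideals in a Noetherian ring B with I a reduction of J. Then for every prime P of B, the analytic spreads agree: ℓ(I B_P) = ℓ(J B_P). -/

import Mathlib

open TensorProduct IsLocalRing

open Polynomial

section KrullDimAux

/-- If every `<`-series in `α` lifts to one of the same length in `β`, then
`krullDim α ≤ krullDim β`. -/
private lemma krullDim_le_of_seriesLift {α β : Type*} [Preorder α] [Preorder β]
    (H : ∀ p : LTSeries α, ∃ q : LTSeries β, q.length = p.length) :
    Order.krullDim α ≤ Order.krullDim β := by
  rw [Order.krullDim]
  apply iSup_le
  intro p
  obtain ⟨q, hq⟩ := H p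
  rw [Order.krullDim]
  exact hq ▸ le_iSup (fun r : LTSeries β => (r.length : WithBot ℕ∞)) q

private lemma liftSeries_of_integral {R S : Type*} [CommRing R] [CommRing S] [Algebra R S]
    [Algebra.IsIntegral R S] (hinj : Function.Injective (algebraMap R S)) :
    ∀ (N : ℕ) (p : LTSeries (PrimeSpectrum R)), p.length = N →
      ∃ q : LTSeries (PrimeSpectrum S),
        q.length = p.length ∧ (q.last.asIdeal.comap (algebraMap R S)) = p.last.asIdeal := by
  intro N
  induction N with
  | zero =>
    intro p hp
    haveI := p.last.isPrime
    have hker : (⊥ : Ideal S).comap (algebraMap R S) ≤ p.last.asIdeal := by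
      intro x hx
      have hx0 : algebraMap R S x = 0 := hx
      have : x = 0 := hinj (by simpa using hx0)
      subst this
      exact zero_mem _
    obtain ⟨Q, -, hQprime, hQ⟩ :=
      Ideal.exists_ideal_over_prime_of_isIntegral p.last.asIdeal ⊥ hker
    refine ⟨RelSeries.singleton _ ⟨Q, hQprime⟩, by simpa [hp], ?_⟩
    simpa using hQ
  | succ N ih =>
    intro p hp
    have hlen : p.eraseLast.length = N := by simp [hp]
    obtain ⟨q, hq, hql⟩ := ih p.eraseLast hlen
    have hstep : p.eraseLast.last < p.last := p.eraseLast_last_rel_last (by omega)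
    haveI := p.last.isPrime
    haveI := q.last.isPrime
    have hle : q.last.asIdeal.comap (algebraMap R S) ≤ p.last.asIdeal := by
      rw [hql]; exact hstep.le
    obtain ⟨Q, hQge, hQprime, hQ⟩ :=
      Ideal.exists_ideal_over_prime_of_isIntegral p.last.asIdeal q.last.asIdeal hle
    have hne : q.last.asIdeal ≠ Q := by
      intro h
      apply hstep.ne
      apply PrimeSpectrum.ext
      rw [← hql, h, hQ]
    have hlt : q.last < (⟨Q, hQprime⟩ : PrimeSpectrum S) :=
      lt_iff_le_not_ge.mpr ⟨hQge, fun h => hne (le_antisymm hQge h)⟩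
    refine ⟨q.snoc _ hlt, by simpa [hp] using by omega, ?_⟩
    rw [RelSeries.last_snoc]
    exact hQ

/-- An injective integral ring map preserves Krull dimension. -/
private lemma ringKrullDim_eq_of_integral {R S : Type*} [CommRing R] [CommRing S] [Algebra R S]
    [Algebra.IsIntegral R S] (hinj : Function.Injective (algebraMap R S)) :
    ringKrullDim S = ringKrullDim R := by
  apply le_antisymm
  · show Order.krullDim _ ≤ Order.krullDim _
    apply Order.krullDim_le_of_strictMono
      (fun p : PrimeSpectrum S => PrimeSpectrum.comap (algebraMap R S) p)
    intro p q hpq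
    haveI := p.isPrime
    have h1 : p.asIdeal ≤ q.asIdeal := hpq.le
    have h2 : ¬ q.asIdeal ≤ p.asIdeal := fun h => hpq.2 h
    obtain ⟨x, hxq, hxp⟩ := SetLike.not_le_iff_exists.mp h2
    have hlt : p.asIdeal.comap (algebraMap R S) < q.asIdeal.comap (algebraMap R S) :=
      Ideal.comap_lt_comap_of_integral_mem_sdiff h1 ⟨hxq, hxp⟩ (Algebra.IsIntegral.isIntegral x)
    exact lt_iff_le_not_ge.mpr ⟨hlt.le, fun h => hlt.not_ge h⟩
  · show Order.krullDim _ ≤ Order.krullDim _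
    apply krullDim_le_of_seriesLift
    intro p
    obtain ⟨q, hq, -⟩ := liftSeries_of_integral hinj p.length p rfl
    exact ⟨q, hq⟩

private lemma ringKrullDim_eq_of_integral' {R S : Type*} [CommRing R] [CommRing S]
    (f : R →+* S) (hfi : f.IsIntegral) (hinj : Function.Injective f) :
    ringKrullDim S = ringKrullDim R := by
  letI : Algebra R S := f.toAlgebra
  haveI : Algebra.IsIntegral R S := ⟨hfi⟩
  exact ringKrullDim_eq_of_integral (hinj : Function.Injective (algebraMap R S))

/-- Quotients by two ideals between `I` and `I.radical` have the same Krull dimension. -/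
private lemma ringKrullDim_quot_eq_of_le_radical {R : Type*} [CommRing R] (I J : Ideal R)
    (h1 : I ≤ J) (h2 : J ≤ I.radical) :
    ringKrullDim (R ⧸ J) = ringKrullDim (R ⧸ I) := by
  apply le_antisymm
  · apply ringKrullDim_le_of_surjective (Ideal.Quotient.factor h1)
    intro x
    obtain ⟨a, rfl⟩ := Ideal.Quotient.mk_surjective x
    exact ⟨Ideal.Quotient.mk I a, Ideal.Quotient.factor_mk h1 a⟩
  · show Order.krullDim _ ≤ Order.krullDim _
    have hcomap : ∀ p : PrimeSpectrum (R ⧸ I),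
        J ≤ p.asIdeal.comap (Ideal.Quotient.mk I) := by
      intro p
      haveI := p.isPrime
      have hI : I ≤ p.asIdeal.comap (Ideal.Quotient.mk I) := by
        intro a ha
        show Ideal.Quotient.mk I a ∈ p.asIdeal
        rw [Ideal.Quotient.eq_zero_iff_mem.mpr ha]
        exact zero_mem _
      exact h2.trans ((Ideal.IsPrime.radical_le_iff inferInstance).mpr hI)
    have hprime : ∀ p : PrimeSpectrum (R ⧸ I),
        ((p.asIdeal.comap (Ideal.Quotient.mk I)).map (Ideal.Quotient.mk J)).IsPrime := by
      intro p
      haveI := p.isPrime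
      exact Ideal.map_isPrime_of_surjective Ideal.Quotient.mk_surjective
        (by rw [Ideal.mk_ker]; exact hcomap p)
    apply Order.krullDim_le_of_strictMono
      (fun p : PrimeSpectrum (R ⧸ I) =>
        (⟨(p.asIdeal.comap (Ideal.Quotient.mk I)).map (Ideal.Quotient.mk J), hprime p⟩ :
          PrimeSpectrum (R ⧸ J)))
    intro p q hpq
    have h1' : p.asIdeal ≤ q.asIdeal := hpq.le
    have hPle : p.asIdeal.comap (Ideal.Quotient.mk I) ≤ q.asIdeal.comap (Ideal.Quotient.mk I) :=
      Ideal.comap_mono h1'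
    have hPne : p.asIdeal.comap (Ideal.Quotient.mk I) ≠ q.asIdeal.comap (Ideal.Quotient.mk I) := by
      intro h
      apply hpq.ne
      apply PrimeSpectrum.ext
      have := congrArg (Ideal.map (Ideal.Quotient.mk I)) h
      rwa [Ideal.map_comap_of_surjective _ Ideal.Quotient.mk_surjective,
        Ideal.map_comap_of_surjective _ Ideal.Quotient.mk_surjective] at this
    have hmapne : (p.asIdeal.comap (Ideal.Quotient.mk I)).map (Ideal.Quotient.mk J) ≠
        (q.asIdeal.comap (Ideal.Quotient.mk I)).map (Ideal.Quotient.mk J) := by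
      intro h
      apply hPne
      have := congrArg (Ideal.comap (Ideal.Quotient.mk J)) h
      rwa [Ideal.comap_map_of_surjective _ Ideal.Quotient.mk_surjective,
        Ideal.comap_map_of_surjective _ Ideal.Quotient.mk_surjective,
        ← RingHom.ker_eq_comap_bot, Ideal.mk_ker,
        sup_eq_left.mpr (hcomap p), sup_eq_left.mpr (hcomap q)] at this
    have hlt : (p.asIdeal.comap (Ideal.Quotient.mk I)).map (Ideal.Quotient.mk J) <
        (q.asIdeal.comap (Ideal.Quotient.mk I)).map (Ideal.Quotient.mk J) :=
      lt_of_le_of_ne (Ideal.map_mono hPle) hmapne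
    exact lt_iff_le_not_ge.mpr ⟨hlt.le, fun h => hlt.not_ge h⟩

end KrullDimAux

section TensorAux

/-- The special fiber `k ⊗ R` has the same dimension as `R ⧸ 𝔪R`. -/
private lemma ringKrullDim_residue_tensor (A R : Type*) [CommRing A] [IsLocalRing A]
    [CommRing R] [Algebra A R] :
    ringKrullDim ((ResidueField A) ⊗[A] R) =
      ringKrullDim (R ⧸ (maximalIdeal A).map (algebraMap A R)) := by
  set M := maximalIdeal A with hM
  set Q := M.map (algebraMap A R) with hQ
  -- the forward algebra map
  have hv : ∀ a : A, a ∈ M →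
      ((Ideal.Quotient.mkₐ A Q).comp (Algebra.ofId A R)) a = 0 := by
    intro a ha
    show Ideal.Quotient.mk Q (algebraMap A R a) = 0
    exact Ideal.Quotient.eq_zero_iff_mem.mpr (Ideal.mem_map_of_mem _ ha)
  let f : (ResidueField A) →ₐ[A] R ⧸ Q :=
    Ideal.Quotient.liftₐ M ((Ideal.Quotient.mkₐ A Q).comp (Algebra.ofId A R)) hv
  let g : R →ₐ[A] R ⧸ Q := Ideal.Quotient.mkₐ A Q
  let fwd : ((ResidueField A) ⊗[A] R) →ₐ[A] R ⧸ Q :=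
    Algebra.TensorProduct.lift f g (fun x y => Commute.all _ _)
  have fwd_surj : Function.Surjective fwd := by
    intro z
    obtain ⟨r, rfl⟩ := Ideal.Quotient.mk_surjective z
    refine ⟨(1 : ResidueField A) ⊗ₜ[A] r, ?_⟩
    show Algebra.TensorProduct.lift f g _ (1 ⊗ₜ r) = _
    rw [Algebra.TensorProduct.lift_tmul, map_one, one_mul]
    rfl
  -- backwards ring hom
  have hvanish : ∀ r ∈ Q, (Algebra.TensorProduct.includeRight :
      R →ₐ[A] (ResidueField A) ⊗[A] R) r = 0 := by
    have : Q ≤ RingHom.ker (Algebra.TensorProduct.includeRight :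
        R →ₐ[A] (ResidueField A) ⊗[A] R).toRingHom := by
      rw [hQ, Ideal.map_le_iff_le_comap]
      intro a ha
      rw [Ideal.mem_comap, RingHom.mem_ker]
      show (1 : ResidueField A) ⊗ₜ[A] (algebraMap A R a) = 0
      rw [Algebra.algebraMap_eq_smul_one, ← TensorProduct.smul_tmul]
      have h0 : a • (1 : ResidueField A) = 0 := by
        rw [← Algebra.algebraMap_eq_smul_one]
        exact Ideal.Quotient.eq_zero_iff_mem.mpr ha
      rw [h0, TensorProduct.zero_tmul]
    exact fun r hr => this hr
  let bwd : R ⧸ Q →+* (ResidueField A) ⊗[A] R :=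
    Ideal.Quotient.lift Q (Algebra.TensorProduct.includeRight :
      R →ₐ[A] (ResidueField A) ⊗[A] R).toRingHom hvanish
  have bwd_surj : Function.Surjective bwd := by
    intro z
    induction z using TensorProduct.induction_on with
    | zero => exact ⟨0, map_zero _⟩
    | tmul x r =>
      obtain ⟨a, rfl⟩ := Ideal.Quotient.mk_surjective x
      refine ⟨Ideal.Quotient.mk Q (algebraMap A R a * r), ?_⟩
      show (1 : ResidueField A) ⊗ₜ[A] (algebraMap A R a * r) = _
      rw [← Algebra.smul_def, ← TensorProduct.smul_tmul, ← Algebra.algebraMap_eq_smul_one]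
      rfl
    | add x y hx hy =>
      obtain ⟨a, ha⟩ := hx
      obtain ⟨b, hb⟩ := hy
      exact ⟨a + b, by rw [map_add, ha, hb]⟩
  exact le_antisymm (ringKrullDim_le_of_surjective bwd bwd_surj)
    (ringKrullDim_le_of_surjective fwd.toRingHom fwd_surj)

end TensorAux

section Key

set_option maxHeartbeats 2000000 in
set_option synthInstance.maxHeartbeats 400000 in
open Submodule in
private theorem analyticSpread_eq_of_reduction_local {A : Type*} [CommRing A] [IsLocalRing A]
    [IsNoetherianRing A] (I J : Ideal A) (hIJ : I ≤ J) (n : ℕ)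
    (hn : I * J ^ n = J ^ (n + 1)) :
    ringKrullDim ((ResidueField A) ⊗[A] (reesAlgebra I))
      = ringKrullDim ((ResidueField A) ⊗[A] (reesAlgebra J)) := by
  classical
  -- powers of J beyond n
  have hpow : ∀ m : ℕ, J ^ (n + m) = I ^ m * J ^ n := by
    intro m
    induction m with
    | zero => simp
    | succ m ih =>
      show J ^ ((n + m) + 1) = _
      calc J ^ ((n + m) + 1) = J ^ (n + m) * J := by rw [pow_succ]
        _ = I ^ m * J ^ n * J := by rw [ih]
        _ = I ^ m * J ^ (n + 1) := by rw [mul_assoc, ← pow_succ]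
        _ = I ^ m * (I * J ^ n) := by rw [hn]
        _ = I ^ (m + 1) * J ^ n := by rw [pow_succ, mul_assoc, mul_comm I (J ^ n), ← mul_assoc]
  have hST : reesAlgebra I ≤ reesAlgebra J := by
    intro f hf
    rw [mem_reesAlgebra_iff] at hf ⊢
    exact fun i => Ideal.pow_right_mono hIJ i (hf i)
  set S := reesAlgebra I with hS
  set T := reesAlgebra J with hT
  letI : Algebra S T := (Subalgebra.inclusion hST).toRingHom.toAlgebra
  -- generators of powers of J
  have hfg : ∀ d : ℕ, ∃ s : Finset A, Ideal.span ↑s = J ^ d := fun d =>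
    IsNoetherian.noetherian (J ^ d)
  choose gset hgset using hfg
  let G : Finset A[X] := (Finset.range (n + 1)).biUnion fun d =>
    (gset d).image fun r => (monomial d r : A[X])
  have smul_eq : ∀ (s : S) (f : A[X]), s • f = (s : A[X]) * f := fun s f => rfl
  -- all monomials of T lie in the S-span of G
  have base : ∀ d, d ≤ n → ∀ r ∈ J ^ d,
      (monomial d r : A[X]) ∈ Submodule.span S (G : Set A[X]) := by
    intro d hd r hr
    rw [← hgset d] at hr
    refine Submodule.span_induction ?_ ?_ ?_ ?_ hr
    · intro x hx
      apply Submodule.subset_span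
      simp only [G, Finset.coe_biUnion, Finset.coe_image, Set.mem_iUnion]
      exact ⟨d, Finset.mem_coe.mpr (Finset.mem_range.mpr (by omega)), x, hx, rfl⟩
    · rw [map_zero]; exact zero_mem _
    · intro x y hx hy hx' hy'
      rw [map_add]; exact add_mem hx' hy'
    · intro a x hx hx'
      have h1 : (monomial d) (a • x) = a • ((monomial d x) : A[X]) := by
        rw [smul_monomial, smul_eq_mul]
      have h2 : a • ((monomial d x) : A[X]) =
          (⟨Polynomial.C a, (reesAlgebra I).algebraMap_mem a⟩ : S) • (monomial d x : A[X]) := by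
        rw [smul_eq, Polynomial.smul_eq_C_mul]
      rw [h1, h2]
      exact Submodule.smul_mem _ _ hx'
  have mono_mem : ∀ (d : ℕ) (r : A), r ∈ J ^ d →
      (monomial d r : A[X]) ∈ Submodule.span S (G : Set A[X]) := by
    intro d r hr
    rcases le_or_gt d n with hd | hd
    · exact base d hd r hr
    · have hd' : d = n + (d - n) := by omega
      rw [hd', hpow (d - n)] at hr
      clear hd'
      refine Submodule.mul_induction_on hr ?_ ?_
      · intro x hx y hy
        have h2 : (d - n) + n = d := by omega
        have hxy : (monomial d) (x * y) = (monomial (d - n) x) * (monomial n y : A[X]) := by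
          rw [monomial_mul_monomial, h2]
        rw [hxy]
        have hxS : (monomial (d - n) x : A[X]) ∈ reesAlgebra I := reesAlgebra.monomial_mem.mpr hx
        have := Submodule.smul_mem (Submodule.span S (G : Set A[X]))
          (⟨_, hxS⟩ : S) (base n le_rfl y hy)
        rwa [smul_eq] at this
      · intro x y hx hy
        rw [map_add]; exact add_mem hx hy
  have hGT : ∀ f ∈ G, f ∈ T := by
    intro f hf
    simp only [G, Finset.mem_biUnion, Finset.mem_image, Finset.mem_range] at hf
    obtain ⟨d, -, r, hr, rfl⟩ := hf
    exact reesAlgebra.monomial_mem.mpr (hgset d ▸ Ideal.subset_span hr)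
  have hspanT : ∀ t : T, (t : A[X]) ∈ Submodule.span S (G : Set A[X]) := by
    intro t
    have h2 : ∀ i, (t : A[X]).coeff i ∈ J ^ i := (mem_reesAlgebra_iff J (t : A[X])).mp t.2
    have heq : (t : A[X]) = ∑ i ∈ (t : A[X]).support, monomial i ((t : A[X]).coeff i) :=
      (t : A[X]).as_sum_support
    have hmem := Submodule.sum_mem (Submodule.span S (G : Set A[X]))
      (fun i (_ : i ∈ (t : A[X]).support) => mono_mem i _ (h2 i))
    rwa [← heq] at hmem
  -- T is module-finite over S
  let ι : T →ₗ[S] A[X] :=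
    { toFun := fun t => (t : A[X])
      map_add' := fun _ _ => rfl
      map_smul' := fun _ _ => rfl }
  have hι : Function.Injective ι := fun a b h => Subtype.ext h
  let Gt : Finset T := G.attach.image fun f => (⟨f.1, hGT f.1 f.2⟩ : T)
  haveI hMF : Module.Finite S T := by
    constructor
    refine ⟨Gt, ?_⟩
    rw [eq_top_iff]
    rintro t -
    have himg : ι '' (Gt : Set T) = (G : Set A[X]) := by
      ext x
      constructor
      · rintro ⟨y, hy, rfl⟩
        simp only [Gt, Finset.coe_image, Set.mem_image, Finset.mem_coe, Finset.mem_attach] at hy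
        obtain ⟨z, -, rfl⟩ := hy
        exact z.2
      · intro hx
        exact ⟨⟨x, hGT x hx⟩, Finset.mem_coe.mpr
          (Finset.mem_image.mpr ⟨⟨x, hx⟩, Finset.mem_attach _ _, rfl⟩), rfl⟩
    have h1 : ι t ∈ Submodule.span S (ι '' (Gt : Set T)) := by
      rw [himg]; exact hspanT t
    rw [Submodule.span_image] at h1
    obtain ⟨t', ht', heq⟩ := h1
    rw [← hι heq]
    exact ht'
  haveI : Algebra.IsIntegral S T := Algebra.IsIntegral.of_finite S T
  -- the relevant ideals
  set mS : Ideal S := (maximalIdeal A).map (algebraMap A S) with hmS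
  set mT : Ideal T := (maximalIdeal A).map (algebraMap A T) with hmT
  have hcomp : (algebraMap S T).comp (algebraMap A S) = algebraMap A T :=
    RingHom.ext fun a => Subtype.ext rfl
  have hmap : mS.map (algebraMap S T) = mT := by
    rw [hmS, hmT, Ideal.map_map, hcomp]
  have hinj : Function.Injective (algebraMap S T) :=
    fun a b h => Subalgebra.inclusion_injective hST (Subtype.ext (congrArg Subtype.val h))
  -- radical containment via the determinant trick
  have hq2 : mT.comap (algebraMap S T) ≤ mS.radical := by
    intro x hx
    rw [Ideal.mem_comap, ← hmap] at hx
    set f : Module.End S T := Algebra.lmul S T (algebraMap S T x) with hf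
    have hrange : LinearMap.range f ≤ mS • (⊤ : Submodule S T) := by
      rintro y ⟨t, rfl⟩
      rw [Ideal.smul_top_eq_map]
      show f t ∈ mS.map (algebraMap S T)
      have : f t = (algebraMap S T x) * t := rfl
      rw [this]
      exact Ideal.mul_mem_right t _ hx
    obtain ⟨p, hmonic, -, hcoeff, heval⟩ :=
      LinearMap.exists_monic_and_coeff_mem_pow_and_aeval_eq_zero_of_range_le_smul S f mS hrange
    have h1 := LinearMap.congr_fun heval (1 : T)
    rw [Polynomial.aeval_endomorphism, LinearMap.zero_apply] at h1
    have hfn : ∀ k : ℕ, (f ^ k) (1 : T) = algebraMap S T (x ^ k) := by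
      intro k
      rw [hf, ← map_pow (Algebra.lmul S T), map_pow (algebraMap S T)]
      show (algebraMap S T x) ^ k * 1 = (algebraMap S T x) ^ k
      rw [mul_one]
    have h2 : algebraMap S T (p.sum fun k b => b * x ^ k) = 0 := by
      rw [Polynomial.sum_def, map_sum]
      calc ∑ k ∈ p.support, algebraMap S T (p.coeff k * x ^ k)
          = ∑ k ∈ p.support, p.coeff k • (f ^ k) (1 : T) :=
            Finset.sum_congr rfl (fun k _ => by rw [hfn k, Algebra.smul_def, map_mul])
        _ = 0 := by first | exact h1 | (rw [Polynomial.sum_def] at h1; exact h1)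
    have h3 : (p.sum fun k b => b * x ^ k) = 0 := by
      apply hinj
      rw [h2, map_zero]
    have heval0 : p.eval x = 0 := by rw [Polynomial.eval_eq_sum]; exact h3
    have hd : x ^ p.natDegree ∈ mS := by
      rw [Polynomial.eval_eq_sum_range, Finset.sum_range_succ,
        hmonic.coeff_natDegree, one_mul] at heval0
      have hxd : x ^ p.natDegree =
          -∑ i ∈ Finset.range p.natDegree, p.coeff i * x ^ i :=
        eq_neg_of_add_eq_zero_right heval0
      rw [hxd]
      apply neg_mem
      apply Submodule.sum_mem
      intro i hi
      apply Ideal.mul_mem_right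
      have hlt : i < p.natDegree := Finset.mem_range.mp hi
      exact Ideal.pow_le_self (by omega) (hcoeff i)
    exact Ideal.mem_radical_iff.mpr ⟨p.natDegree, hd⟩
  have hq1 : mS ≤ mT.comap (algebraMap S T) :=
    Ideal.map_le_iff_le_comap.mp (le_of_eq hmap)
  -- assemble
  calc ringKrullDim ((ResidueField A) ⊗[A] S)
      = ringKrullDim (S ⧸ mS) := ringKrullDim_residue_tensor A S
    _ = ringKrullDim (S ⧸ mT.comap (algebraMap S T)) :=
        (ringKrullDim_quot_eq_of_le_radical mS (mT.comap (algebraMap S T)) hq1 hq2).symm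
    _ = ringKrullDim (T ⧸ mT) :=
        (ringKrullDim_eq_of_integral' (R := S ⧸ mT.comap (algebraMap S T)) (S := T ⧸ mT)
          (Ideal.quotientMap mT (algebraMap S T) le_rfl)
          (RingHom.IsIntegral.quotient _ (Algebra.isIntegral_def.mp inferInstance))
          Ideal.quotientMap_injective).symm
    _ = ringKrullDim ((ResidueField A) ⊗[A] T) := (ringKrullDim_residue_tensor A T).symm

end Key

/-- The analytic spread of an ideal `I` in a local ring `(A, M)`:
the Krull dimension of `A/M ⊗_A Gr_I(A)`, equivalently (as used here) of the
special fiber `A/M ⊗_A A[IW]` of the Rees algebra. -/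
noncomputable def analyticSpread (A : Type*) [CommRing A] [IsLocalRing A] (I : Ideal A) :
    WithBot (WithTop ℕ) :=
  ringKrullDim ((ResidueField A) ⊗[A] (reesAlgebra I))

/-- If `I ⊆ J` is a reduction in a Noetherian ring, then the analytic spreads of the
localizations at any prime agree. -/
theorem analyticSpread_localization_eq_of_reduction
    (B : Type*) [CommRing B] [IsNoetherianRing B] (I J : Ideal B) (hIJ : I ≤ J)
    (hred : ∃ n : ℕ, I * J ^ n = J ^ (n + 1))
    (P : Ideal B) [P.IsPrime] :
    analyticSpread (Localization.AtPrime P) (I.map (algebraMap B (Localization.AtPrime P)))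
      = analyticSpread (Localization.AtPrime P) (J.map (algebraMap B (Localization.AtPrime P))) := by
  obtain ⟨n, hn⟩ := hred
  haveI : IsNoetherianRing (Localization.AtPrime P) :=
    IsLocalization.isNoetherianRing P.primeCompl (Localization.AtPrime P) inferInstance
  exact analyticSpread_eq_of_reduction_local
    (I.map (algebraMap B (Localization.AtPrime P)))
    (J.map (algebraMap B (Localization.AtPrime P)))
    (Ideal.map_mono hIJ) n
    (by rw [← Ideal.map_pow, ← Ideal.map_pow, ← Ideal.map_mul, hn])
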